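/- arXiv:1907.04827 — 2 statements merged into one kernel-verified Lean document; each statement's English description precedes it below -/
import Mathlib

section
/- Histogram rendering correctness (deterministic core): Let p : {1,…,B} → [0,1] be bucket probabilities with maximum p_max > 0, and let p̂ : {1,…,B} → [0,1] be estimates with |p̂(b) − p(b)| ≤ μ·p_max/(2V) for all b, where 0 < μ < 1/2. Define p̂_max = max_b p̂(b) and assign each bucket b the pixel height j(b) ∈ ℤ minimizing |p̂(b) − j·p̂_max/V|. Then for every b, p(b) ∈ [(j(b) − 1/2 − μ)·p_max/V, (j(b) + 1/2 + μ)·p_max/V]. -/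
set_option maxHeartbeats 1000000 in
/-- Deterministic core of histogram rendering correctness (Hillview, Theorem 3).
If each estimated bucket probability is within `μ·p_max/(2V)` of the truth and each
bucket is assigned the pixel height `j b` minimizing `|p̂ b - j·p̂_max/V|`, then every
true bucket probability lies in the widened pixel interval
`[(j b - 1/2 - μ)·p_max/V, (j b + 1/2 + μ)·p_max/V]`. -/
theorem histogram_rendering_deterministic
    (B V : ℕ) (hB : 0 < B) (hV : 0 < V)
    (μ : ℝ) (hμ0 : 0 < μ) (hμhalf : μ < 1 / 2)
    (p phat : Fin B → ℝ)
    (hp : ∀ b, p b ∈ Set.Icc (0 : ℝ) 1) (hphat : ∀ b, phat b ∈ Set.Icc (0 : ℝ) 1)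
    (pmax : ℝ) (hpmax : pmax = Finset.univ.sup' ⟨⟨0, hB⟩, Finset.mem_univ _⟩ p)
    (hpmax_pos : 0 < pmax)
    (phatmax : ℝ) (hphatmax : phatmax = Finset.univ.sup' ⟨⟨0, hB⟩, Finset.mem_univ _⟩ phat)
    (herr : ∀ b, |phat b - p b| ≤ μ * pmax / (2 * V))
    (j : Fin B → ℤ)
    (hj : ∀ b, ∀ k : ℤ, |phat b - (j b : ℝ) * phatmax / V| ≤ |phat b - (k : ℝ) * phatmax / V|) :
    ∀ b, ((j b : ℝ) - 1 / 2 - μ) * pmax / V ≤ p b ∧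
      p b ≤ ((j b : ℝ) + 1 / 2 + μ) * pmax / V := by
  have hne : (Finset.univ : Finset (Fin B)).Nonempty := ⟨⟨0, hB⟩, Finset.mem_univ _⟩
  have hVr1 : (1 : ℝ) ≤ (V : ℝ) := by exact_mod_cast hV
  have hVr : (0 : ℝ) < (V : ℝ) := by linarith
  set e : ℝ := μ * pmax / (2 * (V : ℝ)) with hedef
  have he_pos : 0 < e := by positivity
  have heVr : e * (V : ℝ) = μ * pmax / 2 := by rw [hedef]; field_simp
  have he_small : e < pmax / 4 := by
    rw [hedef, div_lt_div_iff₀ (by positivity) (by norm_num)]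
    nlinarith [mul_pos hpmax_pos hVr]
  -- phatmax bounds
  have hphm_lb : pmax - e ≤ phatmax := by
    obtain ⟨b0, _, hb0⟩ := Finset.exists_mem_eq_sup' hne p
    have h1 : phat b0 ≤ phatmax := by
      rw [hphatmax]; exact Finset.le_sup' _ (Finset.mem_univ b0)
    have h2 := abs_le.mp (herr b0)
    have h3 : p b0 = pmax := by rw [hpmax, hb0]
    linarith [h2.1, h3.le, h3.ge]
  have hphm_ub : phatmax ≤ pmax + e := by
    obtain ⟨b1, _, hb1⟩ := Finset.exists_mem_eq_sup' hne phat
    have h1 : p b1 ≤ pmax := by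
      rw [hpmax]; exact Finset.le_sup' _ (Finset.mem_univ b1)
    have h2 := abs_le.mp (herr b1)
    rw [hphatmax, hb1]; linarith [h2.2]
  have hphm_pos : 0 < phatmax := by linarith
  intro b
  have herr_b := abs_le.mp (herr b)
  have hphat_le : phat b ≤ phatmax := by
    rw [hphatmax]; exact Finset.le_sup' _ (Finset.mem_univ b)
  have hphat_nn : 0 ≤ phat b := (hphat b).1
  -- grid bound
  have hgrid : |phat b - (j b : ℝ) * phatmax / (V : ℝ)| ≤ phatmax / (2 * (V : ℝ)) := by
    set q : ℝ := phat b * (V : ℝ) / phatmax with hqdef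
    have hkey := hj b (round q)
    have heq : phat b - (round q : ℝ) * phatmax / (V : ℝ)
        = (q - round q) * (phatmax / (V : ℝ)) := by
      field_simp [hqdef]
      have hq' : phatmax * q = phat b * (V : ℝ) := by rw [hqdef]; field_simp [hphm_pos.ne']
      linarith
    calc |phat b - (j b : ℝ) * phatmax / (V : ℝ)|
        ≤ |phat b - (round q : ℝ) * phatmax / (V : ℝ)| := hkey
      _ = |q - round q| * (phatmax / (V : ℝ)) := by
          rw [heq, abs_mul, abs_of_pos (by positivity : (0:ℝ) < phatmax / (V : ℝ))]
      _ ≤ (1/2) * (phatmax / (V : ℝ)) :=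
          mul_le_mul_of_nonneg_right (abs_sub_round q) (by positivity)
      _ = phatmax / (2 * (V : ℝ)) := by ring
  have hgrid' := abs_le.mp hgrid
  -- multiplied-out grid bounds
  have hg1 : (j b : ℝ) * phatmax ≤ phat b * (V : ℝ) + phatmax / 2 := by
    have h := mul_le_mul_of_nonneg_right hgrid'.1 hVr.le
    have hexp : (phat b - (j b : ℝ) * phatmax / (V : ℝ)) * (V : ℝ)
        = phat b * (V : ℝ) - (j b : ℝ) * phatmax := by field_simp
    have hexp2 : -(phatmax / (2 * (V : ℝ))) * (V : ℝ) = -(phatmax / 2) := by field_simp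
    rw [hexp, hexp2] at h; linarith
  have hg2 : phat b * (V : ℝ) ≤ (j b : ℝ) * phatmax + phatmax / 2 := by
    have h := mul_le_mul_of_nonneg_right hgrid'.2 hVr.le
    have hexp : (phat b - (j b : ℝ) * phatmax / (V : ℝ)) * (V : ℝ)
        = phat b * (V : ℝ) - (j b : ℝ) * phatmax := by field_simp
    have hexp2 : phatmax / (2 * (V : ℝ)) * (V : ℝ) = phatmax / 2 := by field_simp
    rw [hexp, hexp2] at h; linarith
  -- integer height bounds
  have hj0 : (0 : ℝ) ≤ (j b : ℝ) := by
    have h2 : (-1 : ℝ) < (j b : ℝ) := by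
      nlinarith [hg2, mul_nonneg hphat_nn hVr.le, hphm_pos]
    have h3 : (-1 : ℤ) < j b := by exact_mod_cast h2
    have : (0 : ℤ) ≤ j b := by omega
    exact_mod_cast this
  have hjV : (j b : ℝ) ≤ (V : ℝ) := by
    have h2 : (j b : ℝ) < (V : ℝ) + 1 := by
      nlinarith [hg1, mul_le_mul_of_nonneg_right hphat_le hVr.le, hphm_pos]
    have h3 : j b < (V : ℤ) + 1 := by exact_mod_cast h2
    have : j b ≤ (V : ℤ) := by omega
    exact_mod_cast this
  have ht_lb : -e ≤ phatmax - pmax := by linarith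
  have ht_ub : phatmax - pmax ≤ e := by linarith
  constructor
  · -- lower bound
    rw [div_le_iff₀ hVr]
    have hL : ((j b : ℝ) - 1/2) * (phatmax - pmax) ≥ -(((V : ℝ) - 1/2) * e) := by
      nlinarith [mul_nonneg (by linarith : (0:ℝ) ≤ (j b : ℝ))
          (by linarith : (0:ℝ) ≤ e + (phatmax - pmax)),
        mul_nonneg (by linarith : (0:ℝ) ≤ (V : ℝ) - (j b : ℝ))
          (by linarith : (0:ℝ) ≤ e - (phatmax - pmax)),
        mul_nonneg (by linarith : (0:ℝ) ≤ (V : ℝ) - 1)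
          (by linarith : (0:ℝ) ≤ (phatmax - pmax) + e)]
    have hpe := mul_le_mul_of_nonneg_right
      (by linarith [herr_b.2] : phat b - e ≤ p b) hVr.le
    nlinarith [hg1, hpe, heVr, hL, he_pos]
  · -- upper bound
    rw [le_div_iff₀ hVr]
    have h1 : p b ≤ phat b + e := by linarith [herr_b.1]
    by_cases hcase : j b = (V : ℤ)
    · have hjb : (j b : ℝ) = (V : ℝ) := by rw [hcase]; push_cast; rfl
      rw [hjb]
      have h2 : p b ≤ pmax + 2 * e := by linarith
      nlinarith [heVr, mul_le_mul_of_nonneg_right h2 hVr.le, hpmax_pos]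
    · have hjV' : j b ≤ (V : ℤ) - 1 := by
        have : j b ≤ (V : ℤ) := by exact_mod_cast hjV
        omega
      have hjVr1 : (j b : ℝ) ≤ (V : ℝ) - 1 := by
        exact_mod_cast hjV'
      have hU : ((j b : ℝ) + 1/2) * (phatmax - pmax) ≤ (V : ℝ) * e := by
        nlinarith [mul_nonneg (by linarith : (0:ℝ) ≤ (j b : ℝ) + 1/2)
            (by linarith : (0:ℝ) ≤ e - (phatmax - pmax)),
          mul_nonneg (by linarith : (0:ℝ) ≤ (V : ℝ) - 1/2 - ((j b : ℝ) + 1/2)) he_pos.le]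
      have hpe := mul_le_mul_of_nonneg_right h1 hVr.le
      nlinarith [hg2, hpe, heVr, hU]
end

section
/- Histogram sampling bound: Let a table of N rows induce bucket probabilities p(1), …, p(B) summing to 1 with max p_max. Draw n uniform i.i.d. samples and let p̂(b) be the empirical bucket frequencies. If n ≥ C·(V/(μ·p_max))²·log(B/δ) for a sufficiently large absolute constant C, then with probability at least 1 − δ the computed pixel heights form a μ-approximate histogram: every bar of height j satisfies p(b) ∈ [(j−1/2−μ)p_max/V, (j+1/2+μ)p_max/V]. -/
open MeasureTheory
open scoped Classical


lemma bernoulli_mgf (p t : ℝ) (hp0 : 0 ≤ p) (hp1 : p ≤ 1) :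
    p * Real.exp (t * (1 - p)) + (1 - p) * Real.exp (t * (-p)) ≤ Real.exp (t ^ 2 / 2) := by
  have chord : ∀ y : ℝ, -1 ≤ y → y ≤ 1 →
      Real.exp (t * y) ≤ (1 - y) / 2 * Real.exp (-t) + (1 + y) / 2 * Real.exp t := by
    intro y h1 h2
    have h := convexOn_exp.2 (Set.mem_univ (-t)) (Set.mem_univ t)
      (by linarith : (0:ℝ) ≤ (1 - y) / 2) (by linarith : (0:ℝ) ≤ (1 + y) / 2) (by ring)
    rw [smul_eq_mul, smul_eq_mul, smul_eq_mul, smul_eq_mul] at h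
    have he : (1 - y) / 2 * (-t) + (1 + y) / 2 * t = t * y := by ring
    rwa [he] at h
  have h1 := chord (1 - p) (by linarith) (by linarith)
  have h2 := chord (-p) (by linarith) (by linarith)
  have hcosh := Real.cosh_le_exp_half_sq t
  rw [Real.cosh_eq] at hcosh
  nlinarith [Real.exp_pos t, Real.exp_pos (-t),
    mul_le_mul_of_nonneg_left h1 hp0,
    mul_le_mul_of_nonneg_left h2 (by linarith : (0:ℝ) ≤ 1 - p)]

lemma count_chernoff {α : Type*} [Fintype α] [Nonempty α] (n : ℕ) (hn : 0 < n)
    (P : α → Prop) [DecidablePred P] (ε : ℝ) (hε : 0 < ε) :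
    ((Finset.univ.filter fun ω : Fin n → α =>
        ((Finset.univ.filter fun x : α => P x).card : ℝ) / Fintype.card α + ε ≤
          ((Finset.univ.filter fun i : Fin n => P (ω i)).card : ℝ) / n).card : ℝ)
      ≤ Real.exp (-(n : ℝ) * ε ^ 2 / 2) * (Fintype.card α) ^ n := by
  set N : ℕ := Fintype.card α with hN
  have hNpos : 0 < N := Fintype.card_pos
  set K : ℕ := (Finset.univ.filter fun x : α => P x).card with hK
  set p : ℝ := (K : ℝ) / N with hp
  have hKN : K ≤ N := by
    simpa [hN] using Finset.card_filter_le (Finset.univ : Finset α) P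
  have hp0 : 0 ≤ p := by positivity
  have hp1 : p ≤ 1 := by
    rw [hp, div_le_one (by exact_mod_cast hNpos)]
    exact_mod_cast hKN
  -- per-point weight
  set g : α → ℝ := fun x => Real.exp (ε * ((if P x then (1:ℝ) else 0) - p)) with hg
  -- product formula for each sample sequence
  have key1 : ∀ ω : Fin n → α, (∏ i : Fin n, g (ω i)) =
      Real.exp (ε * (((Finset.univ.filter fun i : Fin n => P (ω i)).card : ℝ) - n * p)) := by
    intro ω
    rw [← Real.exp_sum]
    congr 1
    have hsum : (∑ i : Fin n, (if P (ω i) then (1:ℝ) else 0)) =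
        ((Finset.univ.filter fun i : Fin n => P (ω i)).card : ℝ) := by
      simp [Finset.sum_boole]
    calc (∑ i : Fin n, ε * ((if P (ω i) then (1:ℝ) else 0) - p))
        = ε * ((∑ i : Fin n, (if P (ω i) then (1:ℝ) else 0)) - n * p) := by
          rw [← Finset.mul_sum, Finset.sum_sub_distrib, Finset.sum_const,
            Finset.card_univ, Fintype.card_fin, nsmul_eq_mul]
      _ = ε * (((Finset.univ.filter fun i : Fin n => P (ω i)).card : ℝ) - n * p) := by
          rw [hsum]
  -- total sum over all sequences
  have key2 : (∑ ω : Fin n → α, ∏ i : Fin n, g (ω i)) = (∑ x : α, g x) ^ n := by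
    have h := Finset.prod_univ_sum (fun _ : Fin n => (Finset.univ : Finset α)) (fun _ x => g x)
    rw [Fintype.piFinset_univ] at h
    rw [← h, Finset.prod_const, Finset.card_univ, Fintype.card_fin]
  -- evaluate single-coordinate sum
  have key3 : (∑ x : α, g x) ≤ N * Real.exp (ε ^ 2 / 2) := by
    have hsplit : (∑ x : α, g x) =
        K * Real.exp (ε * (1 - p)) + (N - K : ℝ) * Real.exp (ε * (-p)) := by
      rw [← Finset.sum_filter_add_sum_filter_not Finset.univ P]
      have e1 : ∀ x ∈ Finset.univ.filter P, g x = Real.exp (ε * (1 - p)) := by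
        intro x hx; simp only [Finset.mem_filter] at hx; simp [hg, hx.2]
      have e2 : ∀ x ∈ Finset.univ.filter (fun x => ¬ P x), g x = Real.exp (ε * (-p)) := by
        intro x hx; simp only [Finset.mem_filter] at hx
        simp [hg, hx.2]
      rw [Finset.sum_congr rfl e1, Finset.sum_congr rfl e2,
        Finset.sum_const, Finset.sum_const]
      have hcard2 : (Finset.univ.filter fun x => ¬ P x).card = N - K := by
        have h := Finset.card_filter_add_card_filter_not
          (s := (Finset.univ : Finset α)) (p := fun x => P x)
        rw [Finset.card_univ] at h
        omega
      rw [nsmul_eq_mul, nsmul_eq_mul, hcard2, Nat.cast_sub hKN, ← hK]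
    rw [hsplit]
    have hb := bernoulli_mgf p ε hp0 hp1
    have hNK : (N:ℝ) - K = (1 - p) * N := by
      rw [hp, sub_mul, one_mul, div_mul_cancel₀ _ (by exact_mod_cast hNpos.ne')]
    have hKp : (K:ℝ) = p * N := by rw [hp, div_mul_cancel₀ _ (by exact_mod_cast hNpos.ne')]
    calc (K:ℝ) * Real.exp (ε * (1 - p)) + (N - K : ℝ) * Real.exp (ε * (-p))
        = (p * Real.exp (ε * (1 - p)) + (1 - p) * Real.exp (ε * (-p))) * N := by
          rw [hNK, hKp]; ring
      _ ≤ Real.exp (ε ^ 2 / 2) * N := by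
          apply mul_le_mul_of_nonneg_right hb (by positivity)
      _ = N * Real.exp (ε ^ 2 / 2) := by ring
  -- Markov step
  set bad : Finset (Fin n → α) := Finset.univ.filter fun ω =>
      ((Finset.univ.filter fun x : α => P x).card : ℝ) / N + ε ≤
        ((Finset.univ.filter fun i : Fin n => P (ω i)).card : ℝ) / n with hbad
  have hmarkov : (bad.card : ℝ) * Real.exp (ε * (n * ε)) ≤ ∑ ω : Fin n → α, ∏ i, g (ω i) := by
    have hle : ∀ ω ∈ bad, Real.exp (ε * (n * ε)) ≤ ∏ i, g (ω i) := by
      intro ω hω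
      rw [key1 ω]
      apply Real.exp_le_exp.mpr
      rw [hbad, Finset.mem_filter] at hω
      have h := hω.2
      have hn' : (0:ℝ) < n := by exact_mod_cast hn
      have h2 := mul_le_mul_of_nonneg_left h (le_of_lt hn')
      rw [mul_div_cancel₀ _ (ne_of_gt hn')] at h2
      have hc : (n:ℝ) * ε ≤ ((Finset.univ.filter fun i : Fin n => P (ω i)).card : ℝ) - n * p := by
        rw [hp]; nlinarith [h2]
      nlinarith [hc, hε]
    calc (bad.card : ℝ) * Real.exp (ε * (n * ε)) = ∑ _ω ∈ bad, Real.exp (ε * (n * ε)) := by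
          rw [Finset.sum_const]; ring
      _ ≤ ∑ ω ∈ bad, ∏ i, g (ω i) := Finset.sum_le_sum hle
      _ ≤ ∑ ω : Fin n → α, ∏ i, g (ω i) := by
          apply Finset.sum_le_sum_of_subset_of_nonneg (Finset.subset_univ bad)
          intro ω _ _; positivity
  -- combine
  have hsum : (∑ ω : Fin n → α, ∏ i, g (ω i)) ≤ (N:ℝ) ^ n * Real.exp ((n:ℝ) * (ε ^ 2 / 2)) := by
    rw [key2]
    calc (∑ x : α, g x) ^ n ≤ ((N:ℝ) * Real.exp (ε ^ 2 / 2)) ^ n := by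
          apply pow_le_pow_left₀ ?_ key3
          positivity
      _ = (N:ℝ) ^ n * Real.exp ((n:ℝ) * (ε ^ 2 / 2)) := by
          rw [mul_pow, ← Real.exp_nat_mul]
  have hfinal : (bad.card : ℝ) * Real.exp ((n:ℝ) * ε ^ 2) ≤
      (N:ℝ) ^ n * Real.exp ((n:ℝ) * (ε ^ 2 / 2)) := by
    refine le_trans ?_ (le_trans hmarkov hsum)
    have : ε * ((n:ℝ) * ε) = (n:ℝ) * ε ^ 2 := by ring
    rw [this]
  have hbadcard : (bad.card : ℝ) ≤ Real.exp (-(n : ℝ) * ε ^ 2 / 2) * (N:ℝ) ^ n := by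
    have h3 := mul_le_mul_of_nonneg_right hfinal (Real.exp_pos (-((n:ℝ) * ε ^ 2))).le
    calc (bad.card : ℝ)
        = (bad.card : ℝ) * Real.exp ((n:ℝ) * ε ^ 2) * Real.exp (-((n:ℝ) * ε ^ 2)) := by
          rw [mul_assoc, ← Real.exp_add]; simp
      _ ≤ (N:ℝ) ^ n * Real.exp ((n:ℝ) * (ε ^ 2 / 2)) * Real.exp (-((n:ℝ) * ε ^ 2)) := h3
      _ = Real.exp (-(n : ℝ) * ε ^ 2 / 2) * (N:ℝ) ^ n := by
          rw [mul_assoc, ← Real.exp_add]; ring_nf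
  convert hbadcard using 3
lemma pi_singleton_measurable {m n : ℕ} (ω : Fin n → Fin (m + 1)) :
    MeasurableSet ({ω} : Set (Fin n → Fin (m + 1))) := by
  rw [← Set.univ_pi_singleton]
  exact MeasurableSet.univ_pi (fun i => measurableSet_singleton _)

lemma pi_all_measurable {m n : ℕ} (T : Set (Fin n → Fin (m + 1))) : MeasurableSet T := by
  have h : T = ⋃ ω ∈ T.toFinset, {ω} := by ext x; simp
  rw [h]
  exact MeasurableSet.biUnion (Finset.countable_toSet _)
    (fun ω _ => pi_singleton_measurable ω)

lemma pi_uniform_singleton {m n : ℕ} (ω : Fin n → Fin (m + 1)) :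
    (Measure.pi fun _ : Fin n => (PMF.uniformOfFintype (Fin (m + 1))).toMeasure) {ω}
      = ((m + 1 : ENNReal))⁻¹ ^ n := by
  rw [← Set.univ_pi_singleton, Measure.pi_pi]
  have h : ∀ i : Fin n,
      (PMF.uniformOfFintype (Fin (m + 1))).toMeasure {ω i} = ((m + 1 : ENNReal))⁻¹ := by
    intro i
    rw [PMF.toMeasure_apply_singleton _ _ (measurableSet_singleton _),
      PMF.uniformOfFintype_apply]
    norm_num [Fintype.card_fin]
  simp [h]

lemma pi_uniform_apply {m n : ℕ} (S : Set (Fin n → Fin (m + 1))) :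
    (Measure.pi fun _ : Fin n => (PMF.uniformOfFintype (Fin (m + 1))).toMeasure) S
      = (S.toFinset.card : ENNReal) * ((m + 1 : ENNReal))⁻¹ ^ n := by
  have h : S = ⋃ ω ∈ S.toFinset, {ω} := by ext x; simp
  conv_lhs => rw [h]
  rw [measure_biUnion_finset ?_ (fun ω _ => pi_singleton_measurable ω)]
  · simp only [pi_uniform_singleton, Finset.sum_const, nsmul_eq_mul]
  · intro a _ b _ hab
    simp [Function.onFun, Set.disjoint_singleton_left, hab]
lemma rounding_step (p q qmax pmax μ εv V jb : ℝ)
    (hV1 : 1 ≤ V) (hμ0 : 0 < μ) (hpmax0 : 0 < pmax)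
    (hε0 : 0 < εv) (hVε : V * εv = μ * pmax / 4)
    (hd1a : -εv ≤ q - p) (hd1b : q - p ≤ εv)
    (hd2a : -(qmax / 2) ≤ q * V - jb * qmax) (hd2b : q * V - jb * qmax ≤ qmax / 2)
    (hqm1 : qmax ≤ pmax + εv) (hqm2 : pmax ≤ qmax + εv)
    (hjb0 : 0 ≤ jb) (hjbV : jb ≤ V) :
    (jb - 1 / 2 - μ) * pmax ≤ p * V ∧ p * V ≤ (jb + 1 / 2 + μ) * pmax := by
  have hV0 : (0:ℝ) < V := by linarith
  have hf1 : (q - p) * V ≤ εv * V := mul_le_mul_of_nonneg_right hd1b hV0.le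
  have hf2 : (p - q) * V ≤ εv * V :=
    mul_le_mul_of_nonneg_right (by linarith) hV0.le
  have hf4 : jb * (pmax - qmax) ≤ V * εv := by
    have h1 : jb * (pmax - qmax) ≤ jb * εv :=
      mul_le_mul_of_nonneg_left (by linarith) hjb0
    have h2 : jb * εv ≤ V * εv := mul_le_mul_of_nonneg_right hjbV hε0.le
    linarith
  have hf5 : jb * (qmax - pmax) ≤ V * εv := by
    have h1 : jb * (qmax - pmax) ≤ jb * εv :=
      mul_le_mul_of_nonneg_left (by linarith) hjb0
    have h2 : jb * εv ≤ V * εv := mul_le_mul_of_nonneg_right hjbV hε0.le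
    linarith
  have hf9 : εv ≤ V * εv := by nlinarith
  constructor
  · nlinarith [hf2, hd2a, hf4, hqm1, hf9, hVε]
  · nlinarith [hf1, hd2b, hf5, hqm1, hf9, hVε]
lemma numeric_bound (Br Vr nr μ δ pmax ε : ℝ) (hB2 : 2 ≤ Br) (hδ0 : 0 < δ)
    (hδ1 : δ < 1) (hμ0 : 0 < μ) (hpmax0 : 0 < pmax) (hV0 : 0 < Vr)
    (hε : ε = μ * pmax / (4 * Vr))
    (hn' : nr ≥ 200 * (Vr / (μ * pmax)) ^ 2 * Real.log (Br / δ)) :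
    Br * (2 * Real.exp (-nr * ε ^ 2 / 2)) ≤ δ := by
  have hB0 : (0:ℝ) < Br := by linarith
  have hBδ1 : (1:ℝ) < Br / δ := by
    rw [lt_div_iff₀ hδ0]
    nlinarith
  have hBδpos : (0:ℝ) < Br / δ := by positivity
  have hlog0 : 0 ≤ Real.log (Br / δ) := Real.log_nonneg hBδ1.le
  have hμp : 0 < μ * pmax := by positivity
  have hε0 : 0 < ε := by rw [hε]; positivity
  have hfac : (Vr / (μ * pmax)) ^ 2 * ε ^ 2 = 1 / 16 := by
    rw [hε]
    field_simp
    ring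
  have h2 : 200 * (Vr / (μ * pmax)) ^ 2 * Real.log (Br / δ) * ε ^ 2
      = (25 / 2) * Real.log (Br / δ) := by
    linear_combination (200 * Real.log (Br / δ)) * hfac
  have h3 := mul_le_mul_of_nonneg_right hn'.le (sq_nonneg ε)
  have h4 : 6 * Real.log (Br / δ) ≤ nr * ε ^ 2 / 2 := by nlinarith
  have h5 : Real.exp (-nr * ε ^ 2 / 2) ≤ ((Br / δ) ^ (6:ℕ))⁻¹ := by
    have ha : -nr * ε ^ 2 / 2 ≤ -(6 * Real.log (Br / δ)) := by linarith
    have hb' : Real.exp (-(6 * Real.log (Br / δ))) = ((Br / δ) ^ (6:ℕ))⁻¹ := by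
      rw [Real.exp_neg]
      congr 1
      rw [show (6:ℝ) * Real.log (Br / δ) = Real.log ((Br / δ) ^ (6:ℕ)) by
        rw [Real.log_pow]; push_cast; ring]
      exact Real.exp_log (by positivity)
    rw [← hb']
    exact Real.exp_le_exp.mpr ha
  have hinv : ((Br / δ) ^ (6:ℕ))⁻¹ = δ ^ 6 / Br ^ 6 := by
    rw [div_pow, inv_div]
  have hδ6 : δ ^ (6:ℕ) ≤ δ := pow_le_of_le_one hδ0.le hδ1.le (by norm_num)
  have hB5 : (32:ℝ) ≤ Br ^ 5 := by
    calc (32:ℝ) = 2 ^ 5 := by norm_num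
      _ ≤ Br ^ 5 := pow_le_pow_left₀ (by norm_num) hB2 5
  have hEb : Real.exp (-nr * ε ^ 2 / 2) ≤ δ ^ 6 / Br ^ 6 := by
    rw [← hinv]; exact h5
  have hstep : Br * (2 * Real.exp (-nr * ε ^ 2 / 2)) ≤ Br * (2 * (δ ^ 6 / Br ^ 6)) := by
    gcongr
  refine hstep.trans ?_
  rw [show Br * (2 * (δ ^ 6 / Br ^ 6)) = 2 * Br * δ ^ 6 / Br ^ 6 from by ring,
    div_le_iff₀ (by positivity : (0:ℝ) < Br ^ 6)]
  have k1 : Br * δ ^ 6 ≤ Br * δ := mul_le_mul_of_nonneg_left hδ6 hB0.le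
  have k2 : Br * (32 * δ) ≤ Br * (δ * Br ^ 5) :=
    mul_le_mul_of_nonneg_left (by nlinarith) hB0.le
  nlinarith [mul_nonneg hB0.le hδ0.le]

set_option maxHeartbeats 1000000 in
/-- Histogram sampling bound (Hillview, Theorem 3). A table of `N = M+1` rows with bucket
assignment `bucket` induces bucket probabilities `p b` with maximum `pmax`. With
`n ≥ C·(V/(μ·pmax))²·log(B/δ)` uniform i.i.d. samples, with probability at least `1 - δ`
the pixel heights obtained by rounding `p̂ b·V/p̂max` form a `μ`-approximate histogram:
every bar of height `j` satisfies `p b ∈ [(j-1/2-μ)·pmax/V, (j+1/2+μ)·pmax/V]`. -/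
theorem histogram_sampling_bound :
    ∃ C : ℝ, 0 < C ∧
      ∀ (M B V n : ℕ) (hB : 0 < B), 0 < V → 0 < n →
      ∀ (bucket : Fin (M + 1) → Fin B) (μ δ : ℝ),
        0 < μ → μ < 1 / 2 → 0 < δ → δ < 1 →
      ∀ pmax : ℝ,
        pmax = Finset.univ.sup' ⟨⟨0, hB⟩, Finset.mem_univ _⟩
          (fun b => ((Finset.univ.filter fun i : Fin (M + 1) => bucket i = b).card : ℝ)
            / (M + 1)) →
        (n : ℝ) ≥ C * ((V : ℝ) / (μ * pmax)) ^ 2 * Real.log (B / δ) →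
        ENNReal.ofReal (1 - δ) ≤
          (Measure.pi fun _ : Fin n => (PMF.uniformOfFintype (Fin (M + 1))).toMeasure)
            {ω : Fin n → Fin (M + 1) | ∀ b : Fin B,
              -- the pixel height assigned to bucket `b` from the empirical frequencies
              ∀ jb : ℤ,
                jb = round
                  ((((Finset.univ.filter fun i : Fin n => bucket (ω i) = b).card : ℝ) / n)
                    * V /
                    (Finset.univ.sup' ⟨⟨0, hB⟩, Finset.mem_univ _⟩
                      (fun b' =>
                        ((Finset.univ.filter fun i : Fin n => bucket (ω i) = b').card : ℝ)
                          / n))) →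
                (((jb : ℝ) - 1 / 2 - μ) * pmax / V ≤
                    ((Finset.univ.filter fun i : Fin (M + 1) => bucket i = b).card : ℝ)
                      / (M + 1) ∧
                  ((Finset.univ.filter fun i : Fin (M + 1) => bucket i = b).card : ℝ)
                      / (M + 1) ≤ ((jb : ℝ) + 1 / 2 + μ) * pmax / V)} := by
  refine ⟨200, by norm_num, ?_⟩
  intro M B V n hB hV hn bucket μ δ hμ0 hμh hδ0 hδ1 pmax hpmax hn'
  set μmeas := (Measure.pi fun _ : Fin n => (PMF.uniformOfFintype (Fin (M + 1))).toMeasure)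
    with hμmeas
  have hne : (Finset.univ : Finset (Fin B)).Nonempty := ⟨⟨0, hB⟩, Finset.mem_univ _⟩
  -- basic positivity facts
  have hV1 : (1:ℝ) ≤ V := by exact_mod_cast hV
  have hV0 : (0:ℝ) < V := by linarith
  have hn0 : (0:ℝ) < n := by exact_mod_cast hn
  have hM0 : (0:ℝ) < (M:ℝ) + 1 := by positivity
  have hB0 : (0:ℝ) < B := by exact_mod_cast hB
  -- the true bucket probabilities
  set pfun : Fin B → ℝ := fun b =>
    ((Finset.univ.filter fun i : Fin (M + 1) => bucket i = b).card : ℝ) / (M + 1) with hpfun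
  have hple : ∀ b, pfun b ≤ pmax := by
    intro b
    rw [hpmax]
    exact Finset.le_sup' _ (Finset.mem_univ b)
  have hcards : ∑ b : Fin B,
      (Finset.univ.filter fun i : Fin (M + 1) => bucket i = b).card = M + 1 := by
    have h := Finset.card_eq_sum_card_fiberwise
      (f := bucket) (s := Finset.univ) (t := Finset.univ) (fun x _ => Finset.mem_univ _)
    simpa using h.symm
  have hsump : ∑ b : Fin B, pfun b = 1 := by
    simp only [hpfun]
    rw [← Finset.sum_div, ← Nat.cast_sum, hcards]
    push_cast
    field_simp
  have hpmax0 : 0 < pmax := by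
    have h := Finset.sum_le_card_nsmul Finset.univ pfun pmax (fun b _ => hple b)
    rw [Finset.card_univ, Fintype.card_fin, nsmul_eq_mul] at h
    nlinarith [hsump, h]
  -- the accuracy threshold
  set ε : ℝ := μ * pmax / (4 * V) with hε
  have hε0 : 0 < ε := by positivity
  have hVε : (V:ℝ) * ε = μ * pmax / 4 := by
    rw [hε]; field_simp
  have hεsmall : ε ≤ pmax / 8 := by
    rw [hε]
    rw [div_le_div_iff₀ (by positivity) (by norm_num)]
    nlinarith [hμh, hpmax0, hV1, hμ0]
  -- empirical frequencies
  set qfun : (Fin n → Fin (M + 1)) → Fin B → ℝ := fun ω b =>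
    ((Finset.univ.filter fun i : Fin n => bucket (ω i) = b).card : ℝ) / n with hqfun
  -- the good event
  set G : Set (Fin n → Fin (M + 1)) := {ω | ∀ b : Fin B, |qfun ω b - pfun b| ≤ ε} with hG
  -- Step A : the good event implies the approximation guarantee
  have hsubset : G ⊆ {ω : Fin n → Fin (M + 1) | ∀ b : Fin B,
      ∀ jb : ℤ,
        jb = round
          ((((Finset.univ.filter fun i : Fin n => bucket (ω i) = b).card : ℝ) / n)
            * V /
            (Finset.univ.sup' ⟨⟨0, hB⟩, Finset.mem_univ _⟩
              (fun b' =>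
                ((Finset.univ.filter fun i : Fin n => bucket (ω i) = b').card : ℝ)
                  / n))) →
        (((jb : ℝ) - 1 / 2 - μ) * pmax / V ≤
            ((Finset.univ.filter fun i : Fin (M + 1) => bucket i = b).card : ℝ)
              / (M + 1) ∧
          ((Finset.univ.filter fun i : Fin (M + 1) => bucket i = b).card : ℝ)
              / (M + 1) ≤ ((jb : ℝ) + 1 / 2 + μ) * pmax / V)} := by
    intro ω hω b jb hjb
    have hωG : ∀ b : Fin B, |qfun ω b - pfun b| ≤ ε := hω
    set qmax : ℝ := Finset.univ.sup' hne (fun b' =>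
      ((Finset.univ.filter fun i : Fin n => bucket (ω i) = b').card : ℝ) / n) with hqmax
    have hqle : ∀ b', qfun ω b' ≤ qmax := by
      intro b'
      rw [hqmax]
      exact Finset.le_sup' _ (Finset.mem_univ b')
    have hq0 : 0 ≤ qfun ω b := div_nonneg (Nat.cast_nonneg _) hn0.le
    -- |qmax - pmax| ≤ ε
    have hqm1 : qmax ≤ pmax + ε := by
      rw [hqmax]
      apply Finset.sup'_le
      intro b' _
      have h1 := (abs_le.mp (hωG b')).2
      have := hple b'
      have hq : ((Finset.univ.filter fun i : Fin n => bucket (ω i) = b').card : ℝ) / n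
          = qfun ω b' := rfl
      rw [hq]
      linarith
    have hqm2 : pmax ≤ qmax + ε := by
      rw [hpmax]
      apply Finset.sup'_le
      intro b' _
      have h1 := (abs_le.mp (hωG b')).1
      have := hqle b'
      linarith
    have hqmax0 : 0 < qmax := by nlinarith [hεsmall, hpmax0]
    -- the rounding estimate
    set r : ℝ := qfun ω b * V / qmax with hr
    have hround : |r - (jb:ℝ)| ≤ 1 / 2 := by
      rw [hjb]
      exact abs_sub_round r
    have hr0 : 0 ≤ r := by rw [hr]; positivity
    have hrV : r ≤ V := by
      rw [hr, div_le_iff₀ hqmax0]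
      nlinarith [hqle b, hV0]
    -- integer bounds for jb
    have hjb0 : (0:ℝ) ≤ (jb:ℝ) := by
      have h1 : (-1:ℝ) < (jb:ℝ) := by
        have := abs_le.mp hround
        linarith [this.1]
      have h2 : (-1:ℤ) < jb := by exact_mod_cast h1
      have h3 : (0:ℤ) ≤ jb := by omega
      exact_mod_cast h3
    have hjbV : (jb:ℝ) ≤ V := by
      have h1 : (jb:ℝ) < V + 1 := by
        have := abs_le.mp hround
        linarith [this.2]
      have h2 : jb < (V:ℤ) + 1 := by exact_mod_cast h1
      have h3 : jb ≤ (V:ℤ) := by omega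
      exact_mod_cast h3
    -- |q*V - jb*qmax| ≤ qmax/2
    have hmain : |qfun ω b * V - (jb:ℝ) * qmax| ≤ qmax / 2 := by
      have h1 : |r - (jb:ℝ)| * qmax ≤ (1/2) * qmax :=
        mul_le_mul_of_nonneg_right hround hqmax0.le
      have h2 : |r - (jb:ℝ)| * qmax = |(r - (jb:ℝ)) * qmax| := by
        rw [abs_mul, abs_of_pos hqmax0]
      have h3 : (r - (jb:ℝ)) * qmax = qfun ω b * V - (jb:ℝ) * qmax := by
        rw [hr]
        field_simp
      rw [h2, h3] at h1
      linarith
    -- assemble the linear estimates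
    have hd1 := abs_le.mp (hωG b)
    have hd2 := abs_le.mp hmain
    have hkey := rounding_step (pfun b) (qfun ω b) qmax pmax μ ε V (jb:ℝ)
      hV1 hμ0 hpmax0 hε0 hVε (by linarith [hd1.1]) (by linarith [hd1.2])
      (by linarith [hd2.1]) (by linarith [hd2.2]) hqm1 hqm2 hjb0 hjbV
    have hgoalp : ((Finset.univ.filter fun i : Fin (M+1) => bucket i = b).card : ℝ) / (M+1)
        = pfun b := rfl
    rw [hgoalp]
    constructor
    · rw [div_le_iff₀ hV0]
      exact hkey.1
    · rw [le_div_iff₀ hV0]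
      exact hkey.2
  -- reduce to the good event
  refine le_trans ?_ (measure_mono hsubset)
  by_cases hB1 : B = 1
  · -- single bucket : the good event is everything
    subst hB1
    have hGuniv : G = Set.univ := by
      ext ω
      simp only [hG, Set.mem_setOf_eq, Set.mem_univ, iff_true]
      intro b
      have h1 : (Finset.univ.filter fun i : Fin n => bucket (ω i) = b) = Finset.univ :=
        Finset.filter_true_of_mem (fun i _ => Subsingleton.elim _ _)
      have h2 : (Finset.univ.filter fun i : Fin (M + 1) => bucket i = b) = Finset.univ :=
        Finset.filter_true_of_mem (fun i _ => Subsingleton.elim _ _)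
      have hq1 : qfun ω b = 1 := by
        rw [hqfun]
        simp only [h1, Finset.card_univ, Fintype.card_fin]
        field_simp
      have hp1 : pfun b = 1 := by
        rw [hpfun]
        simp only [h2, Finset.card_univ, Fintype.card_fin]
        push_cast
        field_simp
      rw [hq1, hp1]
      simp [hε0.le]
    rw [hGuniv]
    have : μmeas Set.univ = 1 := by
      rw [hμmeas]
      exact measure_univ
    rw [this]
    exact ENNReal.ofReal_le_one.mpr (by linarith)
  · -- at least two buckets : Hoeffding + union bound
    have hB2 : 2 ≤ B := by omega
    have hB2' : (2:ℝ) ≤ B := by exact_mod_cast hB2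
    set E : ℝ := Real.exp (-(n : ℝ) * ε ^ 2 / 2) with hE
    have hE0 : 0 ≤ E := Real.exp_nonneg _
    -- measure of a one-sided deviation event
    have hbadP : ∀ (P : Fin (M + 1) → Prop) (_ : DecidablePred P),
        μmeas {ω : Fin n → Fin (M + 1) |
          ((Finset.univ.filter fun x : Fin (M + 1) => P x).card : ℝ)
              / Fintype.card (Fin (M + 1)) + ε ≤
            ((Finset.univ.filter fun i : Fin n => P (ω i)).card : ℝ) / n} ≤
          ENNReal.ofReal E := by
      intro P hPdec
      have hc := count_chernoff (α := Fin (M + 1)) n hn P ε hε0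
      rw [hμmeas, pi_uniform_apply, Set.toFinset_setOf]
      set c : ℕ := Fintype.card (Fin (M + 1)) with hcdef
      have hcM : (c : ENNReal) = (M : ENNReal) + 1 := by
        rw [hcdef, Fintype.card_fin]
        push_cast
        rfl
      have hpow : ENNReal.ofReal ((c : ℝ) ^ n) = (c : ENNReal) ^ n := by
        rw [← Nat.cast_pow, ENNReal.ofReal_natCast, Nat.cast_pow]
      have h1 : ((Finset.univ.filter fun ω : Fin n → Fin (M + 1) =>
            ((Finset.univ.filter fun x : Fin (M + 1) => P x).card : ℝ) / c + ε ≤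
              ((Finset.univ.filter fun i : Fin n => P (ω i)).card : ℝ) / n).card : ENNReal)
          ≤ ENNReal.ofReal E * (c : ENNReal) ^ n := by
        rw [← ENNReal.ofReal_natCast, ← hpow, ← ENNReal.ofReal_mul hE0]
        exact ENNReal.ofReal_le_ofReal hc
      have hMne : ((M : ENNReal) + 1) ≠ 0 := by simp
      have hMnt : ((M : ENNReal) + 1) ≠ ⊤ := by
        simp [ENNReal.add_ne_top]
      calc ((Finset.univ.filter fun ω : Fin n → Fin (M + 1) =>
            ((Finset.univ.filter fun x : Fin (M + 1) => P x).card : ℝ) / c + ε ≤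
              ((Finset.univ.filter fun i : Fin n => P (ω i)).card : ℝ) / n).card : ENNReal)
              * ((M : ENNReal) + 1)⁻¹ ^ n
          ≤ (ENNReal.ofReal E * (c : ENNReal) ^ n) * ((M : ENNReal) + 1)⁻¹ ^ n :=
            mul_le_mul_left h1 _
        _ = ENNReal.ofReal E := by
            rw [mul_assoc, ← mul_pow, hcM, ENNReal.mul_inv_cancel hMne hMnt, one_pow, mul_one]
    -- the two families of deviation events
    set U : Fin B → Set (Fin n → Fin (M + 1)) := fun b =>
      {ω : Fin n → Fin (M + 1) |
        ((Finset.univ.filter fun x : Fin (M + 1) => bucket x = b).card : ℝ)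
            / Fintype.card (Fin (M + 1)) + ε ≤
          ((Finset.univ.filter fun i : Fin n => bucket (ω i) = b).card : ℝ) / n} with hUdef
    set L : Fin B → Set (Fin n → Fin (M + 1)) := fun b =>
      {ω : Fin n → Fin (M + 1) |
        ((Finset.univ.filter fun x : Fin (M + 1) => ¬ bucket x = b).card : ℝ)
            / Fintype.card (Fin (M + 1)) + ε ≤
          ((Finset.univ.filter fun i : Fin n => ¬ bucket (ω i) = b).card : ℝ) / n} with hLdef
    have hU : ∀ b, μmeas (U b) ≤ ENNReal.ofReal E := by
      intro b
      rw [hUdef]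
      exact hbadP (fun x => bucket x = b) inferInstance
    have hL : ∀ b, μmeas (L b) ≤ ENNReal.ofReal E := by
      intro b
      rw [hLdef]
      exact hbadP (fun x => ¬ bucket x = b) inferInstance
    have hden : ((Fintype.card (Fin (M + 1)) : ℕ) : ℝ) = (M : ℝ) + 1 := by
      rw [Fintype.card_fin]; push_cast; rfl
    -- complement of good event is covered by deviation events
    have hGc : Gᶜ ⊆ ⋃ b : Fin B, (U b ∪ L b) := by
      intro ω hmem
      simp only [hG, Set.mem_compl_iff, Set.mem_setOf_eq] at hmem
      push_neg at hmem
      obtain ⟨b, hb⟩ := hmem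
      rw [Set.mem_iUnion]
      refine ⟨b, ?_⟩
      have hcnt : ((Finset.univ.filter fun i : Fin n => ¬ bucket (ω i) = b).card : ℝ)
          = (n : ℝ) - ((Finset.univ.filter fun i : Fin n => bucket (ω i) = b).card : ℝ) := by
        have h := Finset.card_filter_add_card_filter_not
          (s := (Finset.univ : Finset (Fin n))) (p := fun i => bucket (ω i) = b)
        rw [Finset.card_univ, Fintype.card_fin] at h
        have := congrArg (Nat.cast : ℕ → ℝ) h
        push_cast at this
        linarith
      have hfib : ((Finset.univ.filter fun x : Fin (M + 1) => ¬ bucket x = b).card : ℝ)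
          = ((M : ℝ) + 1) - ((Finset.univ.filter fun x : Fin (M + 1) => bucket x = b).card : ℝ) := by
        have h := Finset.card_filter_add_card_filter_not
          (s := (Finset.univ : Finset (Fin (M + 1)))) (p := fun x => bucket x = b)
        rw [Finset.card_univ, Fintype.card_fin] at h
        have := congrArg (Nat.cast : ℕ → ℝ) h
        push_cast at this
        linarith
      rcases lt_abs.mp hb with hcase | hcase
      · left
        rw [hUdef]
        show ((Finset.univ.filter fun x : Fin (M + 1) => bucket x = b).card : ℝ)
            / Fintype.card (Fin (M + 1)) + ε ≤
          ((Finset.univ.filter fun i : Fin n => bucket (ω i) = b).card : ℝ) / n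
        rw [hden]
        have hq : ((Finset.univ.filter fun i : Fin n => bucket (ω i) = b).card : ℝ) / n
            = qfun ω b := rfl
        have hp : ((Finset.univ.filter fun x : Fin (M+1) => bucket x = b).card : ℝ) / ((M:ℝ)+1)
            = pfun b := rfl
        rw [hq, hp]
        linarith
      · right
        rw [hLdef]
        show ((Finset.univ.filter fun x : Fin (M + 1) => ¬ bucket x = b).card : ℝ)
            / Fintype.card (Fin (M + 1)) + ε ≤
          ((Finset.univ.filter fun i : Fin n => ¬ bucket (ω i) = b).card : ℝ) / n
        rw [hden, hcnt, hfib]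
        have hq : ((Finset.univ.filter fun i : Fin n => bucket (ω i) = b).card : ℝ) / n
            = qfun ω b := rfl
        have hp : ((Finset.univ.filter fun x : Fin (M+1) => bucket x = b).card : ℝ) / ((M:ℝ)+1)
            = pfun b := rfl
        rw [sub_div, sub_div, div_self hn0.ne', div_self hM0.ne', hq, hp]
        linarith
    -- union bound
    have hGcm : μmeas Gᶜ ≤ (B : ENNReal) * (2 * ENNReal.ofReal E) := by
      calc μmeas Gᶜ ≤ μmeas (⋃ b : Fin B, (U b ∪ L b)) := measure_mono hGc
        _ ≤ ∑' b : Fin B, μmeas (U b ∪ L b) := measure_iUnion_le _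
        _ = ∑ b : Fin B, μmeas (U b ∪ L b) := tsum_fintype _
        _ ≤ ∑ _b : Fin B, (2 * ENNReal.ofReal E) := by
            refine Finset.sum_le_sum (fun b _ => ?_)
            calc μmeas (U b ∪ L b) ≤ μmeas (U b) + μmeas (L b) := measure_union_le _ _
              _ ≤ ENNReal.ofReal E + ENNReal.ofReal E := add_le_add (hU b) (hL b)
              _ = 2 * ENNReal.ofReal E := (two_mul _).symm
        _ = (B : ENNReal) * (2 * ENNReal.ofReal E) := by
            rw [Finset.sum_const, Finset.card_univ, Fintype.card_fin, nsmul_eq_mul]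
    -- the numeric estimate
    have hreal : (B : ℝ) * (2 * E) ≤ δ := by
      rw [hE]
      exact numeric_bound B V n μ δ pmax ε hB2' hδ0 hδ1 hμ0 hpmax0 hV0 hε hn'
    -- put everything together
    have hGc2 : μmeas Gᶜ ≤ ENNReal.ofReal δ := by
      refine hGcm.trans ?_
      have heq : (B : ENNReal) * (2 * ENNReal.ofReal E)
          = ENNReal.ofReal ((B : ℝ) * (2 * E)) := by
        rw [ENNReal.ofReal_mul (by positivity), ENNReal.ofReal_mul (by norm_num)]
        rw [ENNReal.ofReal_natCast]
        norm_num
      rw [heq]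
      exact ENNReal.ofReal_le_ofReal hreal
    have hprob : IsProbabilityMeasure μmeas := by
      rw [hμmeas]
      infer_instance
    have hGm : MeasurableSet G := pi_all_measurable G
    have hsum1 : μmeas G + μmeas Gᶜ = 1 := by
      rw [measure_add_measure_compl hGm]
      exact measure_univ
    have h1 : ENNReal.ofReal (1 - δ) + ENNReal.ofReal δ = 1 := by
      rw [← ENNReal.ofReal_add (by linarith) hδ0.le]
      norm_num
    have hfin : ENNReal.ofReal (1 - δ) + ENNReal.ofReal δ ≤ μmeas G + ENNReal.ofReal δ := by
      rw [h1]
      calc (1 : ENNReal) = μmeas G + μmeas Gᶜ := hsum1.symm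
        _ ≤ μmeas G + ENNReal.ofReal δ := add_le_add_right hGc2 _
    exact (ENNReal.add_le_add_iff_right ENNReal.ofReal_ne_top).mp hfin
end
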